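/- An arbitrary product of pre-spectral spaces (with the product topology) is pre-spectral; moreover, the compact open sets of the product are exactly the finite unions of finite intersections of sets p_i^{-1}(K) where p_i is a projection and K is a compact open set of X_i. -/

import Mathlib

open Set TopologicalSpace

/-- A bounded sublattice of the powerset of `X`. -/
def IsBoundedSublattice {X : Type*} (L : Set (Set X)) : Prop :=
  ∅ ∈ L ∧ Set.univ ∈ L ∧ (∀ U ∈ L, ∀ V ∈ L, U ∪ V ∈ L) ∧ ∀ U ∈ L, ∀ V ∈ L, U ∩ V ∈ L

/-- A topology is pre-spectral if its compact open sets form a bounded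
sublattice of the powerset that generates the topology. -/
def IsPreSpectral {X : Type*} (t : TopologicalSpace X) : Prop :=
  IsBoundedSublattice {U : Set X | @IsCompact X t U ∧ t.IsOpen U} ∧
  TopologicalSpace.generateFrom {U : Set X | @IsCompact X t U ∧ t.IsOpen U} = t

section Aux

variable {ι : Type*} {Xs : ι → Type*} [∀ i, TopologicalSpace (Xs i)]

lemma aux_basis (h : ∀ i, IsPreSpectral (inferInstance : TopologicalSpace (Xs i))) (i : ι) :
    IsTopologicalBasis {K : Set (Xs i) | IsCompact K ∧ IsOpen K} := by
  refine ⟨fun t₁ h₁ t₂ h₂ x hx => ⟨t₁ ∩ t₂, ?_, hx, subset_rfl⟩, ?_, ((h i).2).symm⟩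
  · exact (h i).1.2.2.2 t₁ h₁ t₂ h₂
  · exact eq_univ_of_univ_subset (subset_sUnion_of_mem (h i).1.2.1)

/-- A finite intersection of preimages of compact open sets is compact and open. -/
lemma aux_sInter (h : ∀ i, IsPreSpectral (inferInstance : TopologicalSpace (Xs i)))
    (D : Set (Set (∀ i, Xs i))) (hD : D.Finite)
    (hW : ∀ W ∈ D, ∃ (i : ι) (K : Set (Xs i)), IsCompact K ∧ IsOpen K ∧
      W = (fun f : ∀ i, Xs i => f i) ⁻¹' K) :
    IsCompact (⋂₀ D) ∧ IsOpen (⋂₀ D) := by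
  classical
  constructor
  · -- compactness: represent as a `univ.pi` of compact sets
    have key : (∀ W ∈ D, ∃ (i : ι) (K : Set (Xs i)), IsCompact K ∧ IsOpen K ∧
        W = (fun f : ∀ i, Xs i => f i) ⁻¹' K) →
        ∃ C : ∀ i, Set (Xs i), (∀ i, IsCompact (C i) ∧ IsOpen (C i)) ∧
        ⋂₀ D = Set.pi univ C := by
      refine Set.Finite.induction_on (motive := fun D _ => (∀ W ∈ D, ∃ (i : ι) (K : Set (Xs i)),
        IsCompact K ∧ IsOpen K ∧ W = (fun f : ∀ i, Xs i => f i) ⁻¹' K) →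
        ∃ C : ∀ i, Set (Xs i), (∀ i, IsCompact (C i) ∧ IsOpen (C i)) ∧
        ⋂₀ D = Set.pi univ C) D hD ?_ ?_
      · intro _
        exact ⟨fun i => univ, fun i => ⟨(h i).1.2.1.1, (h i).1.2.1.2⟩, by simp⟩
      · intro W S _ _ IH hWS
        obtain ⟨C, hC, hCS⟩ := IH fun V hV => hWS V (mem_insert_of_mem _ hV)
        obtain ⟨i, K, hKc, hKo, hWK⟩ := hWS W (mem_insert _ _)
        refine ⟨fun j => Function.update (fun j : ι => (univ : Set (Xs j))) i K j ∩ C j, fun j => ?_, ?_⟩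
        · rcases eq_or_ne j i with rfl | hne
          · simp only [Function.update_self]
            exact (h j).1.2.2.2 K ⟨hKc, hKo⟩ (C j) (hC j)
          · simp only [Function.update_of_ne hne]
            simpa using hC j
        · rw [sInter_insert, hCS, hWK, Set.pi_inter_distrib, univ_pi_update_univ]
    obtain ⟨C, hC, hCS⟩ := key hW
    rw [hCS]
    exact isCompact_univ_pi fun i => (hC i).1
  · refine hD.isOpen_sInter fun W hWmem => ?_
    obtain ⟨i, K, _, hKo, hWK⟩ := hW W hWmem
    rw [hWK]
    exact hKo.preimage (continuous_apply i)

/-- The right-hand side of the characterization implies compact and open. -/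
lemma aux_back (h : ∀ i, IsPreSpectral (inferInstance : TopologicalSpace (Xs i)))
    (U : Set (∀ i, Xs i))
    (hU : ∃ 𝒞 : Set (Set (∀ i, Xs i)), 𝒞.Finite ∧ U = ⋃₀ 𝒞 ∧
        ∀ V ∈ 𝒞, ∃ 𝒟 : Set (Set (∀ i, Xs i)), 𝒟.Finite ∧ V = ⋂₀ 𝒟 ∧
          ∀ W ∈ 𝒟, ∃ (i : ι) (K : Set (Xs i)), IsCompact K ∧ IsOpen K ∧
            W = (fun f : ∀ i, Xs i => f i) ⁻¹' K) :
    IsCompact U ∧ IsOpen U := by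
  obtain ⟨𝒞, h𝒞fin, rfl, h𝒞⟩ := hU
  have hco : ∀ V ∈ 𝒞, IsCompact V ∧ IsOpen V := by
    intro V hV
    obtain ⟨𝒟, h𝒟fin, rfl, h𝒟⟩ := h𝒞 V hV
    exact aux_sInter h 𝒟 h𝒟fin h𝒟
  exact ⟨h𝒞fin.isCompact_sUnion fun V hV => (hco V hV).1,
    isOpen_sUnion fun V hV => (hco V hV).2⟩

/-- A basic pi set is a finite intersection of preimages of compact opens. -/
lemma aux_pi (C : ∀ i, Set (Xs i)) (F : Finset ι)
    (hC : ∀ i ∈ F, IsCompact (C i) ∧ IsOpen (C i)) :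
    ∃ 𝒟 : Set (Set (∀ i, Xs i)), 𝒟.Finite ∧ (F : Set ι).pi C = ⋂₀ 𝒟 ∧
      ∀ W ∈ 𝒟, ∃ (i : ι) (K : Set (Xs i)), IsCompact K ∧ IsOpen K ∧
        W = (fun f : ∀ i, Xs i => f i) ⁻¹' K := by
  refine ⟨(fun i => (fun f : ∀ i, Xs i => f i) ⁻¹' C i) '' (F : Set ι),
    (F.finite_toSet).image _, ?_, ?_⟩
  · rw [Set.pi_def, sInter_image]
  · rintro W ⟨i, hi, rfl⟩
    exact ⟨i, C i, (hC i hi).1, (hC i hi).2, rfl⟩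

/-- Compact open implies the right-hand side. -/
lemma aux_fwd (h : ∀ i, IsPreSpectral (inferInstance : TopologicalSpace (Xs i)))
    (U : Set (∀ i, Xs i)) (hUc : IsCompact U) (hUo : IsOpen U) :
    ∃ 𝒞 : Set (Set (∀ i, Xs i)), 𝒞.Finite ∧ U = ⋃₀ 𝒞 ∧
        ∀ V ∈ 𝒞, ∃ 𝒟 : Set (Set (∀ i, Xs i)), 𝒟.Finite ∧ V = ⋂₀ 𝒟 ∧
          ∀ W ∈ 𝒟, ∃ (i : ι) (K : Set (Xs i)), IsCompact K ∧ IsOpen K ∧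
            W = (fun f : ∀ i, Xs i => f i) ⁻¹' K := by
  classical
  have hbasis := isTopologicalBasis_pi (fun i => aux_basis h i)
  have hnbhd : ∀ x ∈ U, ∃ V : Set (∀ i, Xs i),
      (∃ (C : ∀ i, Set (Xs i)) (F : Finset ι),
        (∀ i, i ∈ F → IsCompact (C i) ∧ IsOpen (C i)) ∧ V = (F : Set ι).pi C) ∧
      x ∈ V ∧ V ⊆ U := by
    intro x hx
    obtain ⟨V, hV, hxV, hVU⟩ := hbasis.exists_subset_of_mem_open hx hUo
    exact ⟨V, hV, hxV, hVU⟩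
  choose! V hVbasic hxV hVU using hnbhd
  have hVopen : ∀ x ∈ U, IsOpen (V x) := by
    intro x hx
    obtain ⟨C, F, hC, hVC⟩ := hVbasic x hx
    obtain ⟨𝒟, h𝒟fin, h𝒟eq, h𝒟⟩ := aux_pi C F hC
    rw [hVC, h𝒟eq]
    exact (aux_sInter h 𝒟 h𝒟fin h𝒟).2
  obtain ⟨s, hs, hsfin, hcov⟩ := hUc.elim_finite_subcover_image hVopen
    (fun y hy => mem_biUnion hy (hxV y hy))
  refine ⟨V '' s, (hsfin.image _), ?_, ?_⟩
  · refine subset_antisymm (fun y hy => ?_) ?_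
    · obtain ⟨x, hx, hyx⟩ := mem_iUnion₂.1 (hcov hy)
      exact ⟨V x, mem_image_of_mem _ hx, hyx⟩
    · rintro y ⟨W, ⟨x, hx, rfl⟩, hyW⟩
      exact hVU x (hs hx) hyW
  · rintro W ⟨x, hx, rfl⟩
    obtain ⟨C, F, hC, hVC⟩ := hVbasic x (hs hx)
    rw [hVC]
    exact aux_pi C F hC

end Aux

theorem prespectral_pi {ι : Type*} (Xs : ι → Type*) [∀ i, TopologicalSpace (Xs i)]
    (h : ∀ i, IsPreSpectral (inferInstance : TopologicalSpace (Xs i))) :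
    IsPreSpectral (inferInstance : TopologicalSpace (∀ i, Xs i)) ∧
    ∀ U : Set (∀ i, Xs i), (IsCompact U ∧ IsOpen U) ↔
      ∃ 𝒞 : Set (Set (∀ i, Xs i)), 𝒞.Finite ∧ U = ⋃₀ 𝒞 ∧
        ∀ V ∈ 𝒞, ∃ 𝒟 : Set (Set (∀ i, Xs i)), 𝒟.Finite ∧ V = ⋂₀ 𝒟 ∧
          ∀ W ∈ 𝒟, ∃ (i : ι) (K : Set (Xs i)), IsCompact K ∧ IsOpen K ∧
            W = (fun f : ∀ i, Xs i => f i) ⁻¹' K := by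
  have charac : ∀ U : Set (∀ i, Xs i), (IsCompact U ∧ IsOpen U) ↔
      ∃ 𝒞 : Set (Set (∀ i, Xs i)), 𝒞.Finite ∧ U = ⋃₀ 𝒞 ∧
        ∀ V ∈ 𝒞, ∃ 𝒟 : Set (Set (∀ i, Xs i)), 𝒟.Finite ∧ V = ⋂₀ 𝒟 ∧
          ∀ W ∈ 𝒟, ∃ (i : ι) (K : Set (Xs i)), IsCompact K ∧ IsOpen K ∧
            W = (fun f : ∀ i, Xs i => f i) ⁻¹' K :=
    fun U => ⟨fun ⟨hc, ho⟩ => aux_fwd h U hc ho, aux_back h U⟩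
  refine ⟨⟨⟨⟨isCompact_empty, isOpen_empty⟩, ?_, ?_, ?_⟩, ?_⟩, charac⟩
  · -- univ is compact (Tychonoff) and open
    have : ∀ i, CompactSpace (Xs i) := fun i => ⟨(h i).1.2.1.1⟩
    exact ⟨isCompact_univ, isOpen_univ⟩
  · rintro U ⟨hUc, hUo⟩ V ⟨hVc, hVo⟩
    exact ⟨hUc.union hVc, IsOpen.union hUo hVo⟩
  · rintro U hU V hV
    obtain ⟨𝒞, h𝒞fin, rfl, h𝒞⟩ := (charac U).1 hU
    obtain ⟨𝒞', h𝒞'fin, rfl, h𝒞'⟩ := (charac V).1 hV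
    refine (charac _).2 ⟨image2 (· ∩ ·) 𝒞 𝒞', h𝒞fin.image2 _ h𝒞'fin, ?_, ?_⟩
    · ext y
      constructor
      · intro hy
        rw [sUnion_inter_sUnion] at hy
        obtain ⟨p, hp, hyp⟩ := mem_iUnion₂.1 hy
        exact ⟨p.1 ∩ p.2, mem_image2_of_mem hp.1 hp.2, hyp⟩
      · rintro ⟨w, hw, hyw⟩
        obtain ⟨a, ha, b, hb, rfl⟩ := mem_image2.1 hw
        exact ⟨⟨a, ha, hyw.1⟩, ⟨b, hb, hyw.2⟩⟩
    · intro W hW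
      obtain ⟨A, hA, B, hB, rfl⟩ := mem_image2.1 hW
      obtain ⟨𝒟, h𝒟fin, rfl, h𝒟⟩ := h𝒞 A hA
      obtain ⟨𝒟', h𝒟'fin, rfl, h𝒟'⟩ := h𝒞' B hB
      refine ⟨𝒟 ∪ 𝒟', h𝒟fin.union h𝒟'fin, (sInter_union 𝒟 𝒟').symm, ?_⟩
      rintro W (hW | hW)
      exacts [h𝒟 W hW, h𝒟' W hW]
  · -- topology is generated by compact opens
    refine (TopologicalSpace.isTopologicalBasis_of_isOpen_of_nhds
      (fun u hu => hu.2) fun a u hau hu => ?_).eq_generateFrom.symm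
    obtain ⟨v, hv, hav, hvu⟩ :=
      (isTopologicalBasis_pi (fun i => aux_basis h i)).exists_subset_of_mem_open hau hu
    obtain ⟨C, F, hC, rfl⟩ := hv
    refine ⟨(F : Set ι).pi C, ?_, hav, hvu⟩
    obtain ⟨𝒟, h𝒟fin, h𝒟eq, h𝒟⟩ := aux_pi C F hC
    rw [mem_setOf_eq, h𝒟eq]
    exact aux_sInter h 𝒟 h𝒟fin h𝒟
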